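/- Let s ≥ 2 be an integer, p an odd prime, r(p) the rank of (f_n(s,-1)) modulo p, and e = ν_p(f_{r(p)}(s,-1)). Then for every positive integer n: ν_p(f_n(s,-1)) = ν_p(n) - ν_p(r(p)) + e if r(p) | n, and ν_p(f_n(s,-1)) = 0 otherwise. -/

import Mathlib

/-- Generalized Fibonacci sequence: f 0 = 0, f 1 = 1, f (n+2) = s * f (n+1) + t * f n. -/
def genFib (s t : ℤ) : ℕ → ℤ
  | 0 => 0
  | 1 => 1
  | n + 2 => s * genFib s t (n + 1) + t * genFib s t n

namespace GFaux

lemma gf0 (s : ℤ) : genFib s (-1) 0 = 0 := rfl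
lemma gf1 (s : ℤ) : genFib s (-1) 1 = 1 := rfl
lemma gfrec (s : ℤ) (n : ℕ) :
    genFib s (-1) (n + 2) = s * genFib s (-1) (n + 1) - genFib s (-1) n := by
  show s * _ + (-1) * _ = _; ring

lemma addf (s : ℤ) : ∀ m k : ℕ, genFib s (-1) (m + k + 1) =
    genFib s (-1) (m+1) * genFib s (-1) (k+1) - genFib s (-1) m * genFib s (-1) k := by
  intro m
  induction m using Nat.twoStepInduction with
  | zero => intro k; simp [gf0, gf1]
  | one =>
    intro k
    have h : 1 + k + 1 = k + 2 := by omega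
    rw [h, gfrec]
    have h2 : genFib s (-1) 2 = s := by rw [show (2:ℕ) = 0 + 2 from rfl, gfrec]; simp [gf0, gf1]
    rw [h2, gf1]; ring
  | more m ih1 ih2 =>
    intro k
    have e1 : m + 2 + k + 1 = (m + k + 1) + 2 := by omega
    have e2 : m + k + 1 + 1 = m + 1 + k + 1 := by omega
    have e3 : m + 2 + 1 = m + 1 + 2 := by omega
    rw [e1, gfrec, e2, ih2 k, ih1 k, e3, gfrec s (m+1), gfrec s m]
    ring

def gW (s : ℤ) (n : ℕ) : ℤ := 2 * genFib s (-1) (n+1) - s * genFib s (-1) n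

lemma gWrec (s : ℤ) (n : ℕ) : gW s (n+2) = s * gW s (n+1) - gW s n := by
  unfold gW
  have e3 : n + 2 + 1 = n + 1 + 2 := by omega
  rw [e3, gfrec s (n+1), gfrec s n]
  ring

lemma wid (s : ℤ) : ∀ n j : ℕ, genFib s (-1) (2*n + j) + genFib s (-1) j
    = gW s n * genFib s (-1) (n + j) := by
  intro n
  induction n using Nat.twoStepInduction with
  | zero => intro j; simp [gW, gf0, gf1]; ring
  | one =>
    intro j
    have h1 : 2*1 + j = j + 2 := by omega
    have h2 : 1 + j = j + 1 := by omega
    have h3 : gW s 1 = s := by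
      unfold gW
      rw [show (1:ℕ)+1 = 0+2 from rfl, gfrec]; simp [gf0, gf1]; ring
    rw [h1, h2, h3, gfrec]; ring
  | more n ih1 ih2 =>
    intro j
    have A := ih2 (j+1)
    have B := ih1 (j+2)
    have C := gfrec s (2*n + j + 2)
    have D := gfrec s j
    have E := gWrec s n
    have e1 : 2*(n+2) + j = 2*n + j + 2 + 2 := by omega
    have e2 : 2*(n+1) + (j+1) = 2*n + j + 2 + 1 := by omega
    have e3 : n + 1 + (j + 1) = n + (j + 2) := by omega
    have e4 : n + 2 + j = n + (j + 2) := by omega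
    rw [e1, C, e4]
    have e5 : 2*n + (j+2) = 2*n + j + 2 := by omega
    rw [e2, e3] at A
    rw [e5] at B
    linear_combination A * s - B + D - genFib s (-1) (n + (j+2)) * E

lemma mulf (s : ℤ) (n : ℕ) : ∀ k : ℕ, genFib s (-1) (k * n) =
    genFib s (-1) n * genFib (gW s n) (-1) k := by
  intro k
  induction k using Nat.twoStepInduction with
  | zero => simp [gf0]
  | one => simp [gf1]
  | more k ih1 ih2 =>
    have e1 : (k+2) * n = 2*n + k*n := by ring
    have e2 : n + k*n = (k+1) * n := by ring
    have W := wid s n (k*n)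
    rw [e2] at W
    rw [e1, gfrec (gW s n) k]
    linear_combination W + gW s n * ih2 - ih1

lemma inv (s : ℤ) : ∀ n : ℕ,
    genFib s (-1) (n+1) ^ 2 - s * genFib s (-1) (n+1) * genFib s (-1) n
      + genFib s (-1) n ^ 2 = 1 := by
  intro n
  induction n with
  | zero => simp [gf0, gf1]
  | succ n ih => rw [gfrec]; linear_combination ih

lemma copr (s : ℤ) (n : ℕ) :
    IsCoprime (genFib s (-1) n) (genFib s (-1) (n+1)) :=
  ⟨genFib s (-1) n - s * genFib s (-1) (n+1), genFib s (-1) (n+1), by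
    linear_combination inv s n⟩

lemma wsq (s : ℤ) (n : ℕ) : gW s n ^ 2 - 4 = (s^2 - 4) * genFib s (-1) n ^ 2 := by
  have := inv s n
  unfold gW
  linear_combination 4 * this

lemma polycong (a b : ℤ) : ∀ k : ℕ, (a - b) ∣ (genFib a (-1) k - genFib b (-1) k) := by
  intro k
  induction k using Nat.twoStepInduction with
  | zero => simp [gf0]
  | one => simp [gf1]
  | more k ih1 ih2 =>
    obtain ⟨c, hc⟩ := ih1
    obtain ⟨d, hd⟩ := ih2
    refine ⟨a * d + genFib b (-1) (k+1) - c, ?_⟩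
    rw [gfrec a k, gfrec b k]
    linear_combination hd * a - hc
      
lemma gf2val : ∀ k : ℕ, genFib 2 (-1) k = (k : ℤ) := by
  intro k
  induction k using Nat.twoStepInduction with
  | zero => simp [gf0]
  | one => simp [gf1]
  | more k ih1 ih2 =>
    rw [gfrec 2 k, ih1, ih2]; push_cast; ring

lemma gfneg2val : ∀ k : ℕ, genFib (-2) (-1) k = (-1)^(k+1) * (k : ℤ) := by
  intro k
  induction k using Nat.twoStepInduction with
  | zero => simp [gf0]
  | one => simp [gf1]
  | more k ih1 ih2 =>
    rw [gfrec (-2) k, ih1, ih2]; push_cast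
    rw [pow_succ ((-1):ℤ) (k+1), pow_succ ((-1):ℤ) (k+2)]
    ring

lemma mono (s : ℤ) (hs : 2 ≤ s) : ∀ n : ℕ,
    0 ≤ genFib s (-1) n ∧ genFib s (-1) n ≤ genFib s (-1) (n+1) := by
  intro n
  induction n with
  | zero => simp [gf0, gf1]
  | succ n ih =>
    obtain ⟨h1, h2⟩ := ih
    refine ⟨le_trans h1 h2, ?_⟩
    rw [gfrec]
    nlinarith

lemma pos (s : ℤ) (hs : 2 ≤ s) (n : ℕ) (hn : 0 < n) : 0 < genFib s (-1) n := by
  have h : ∀ m : ℕ, 1 ≤ genFib s (-1) (m+1) := by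
    intro m
    induction m with
    | zero => simp [gf1]
    | succ m ih => exact le_trans ih (mono s hs (m+1)).2
  obtain ⟨m, rfl⟩ := Nat.exists_eq_add_of_lt hn
  exact lt_of_lt_of_le one_pos (by simpa using h m)


lemma rank_conv (s : ℤ) (p : ℕ) (hp : p.Prime) (r : ℕ) (hr : 0 < r)
    (hrdvd : (p:ℤ) ∣ genFib s (-1) r)
    (hleast : ∀ l : ℕ, 0 < l → (p : ℤ) ∣ genFib s (-1) l → r ≤ l) :
    ∀ n : ℕ, 0 < n → (p:ℤ) ∣ genFib s (-1) n → r ∣ n := by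
  have hPint : Prime (p:ℤ) := Nat.prime_iff_prime_int.mp hp
  intro n hn hd
  by_contra hnd
  have ht : 0 < n % r := by
    rcases Nat.eq_zero_or_pos (n % r) with h | h
    · exact absurd (Nat.dvd_of_mod_eq_zero h) hnd
    · exact h
  obtain ⟨u, hu⟩ : ∃ u, n % r = u + 1 := ⟨n % r - 1, by omega⟩
  set m := r * (n / r) with hm
  have hnm : n = m + u + 1 := by
    have := Nat.div_add_mod n r
    omega
  have hpm : (p:ℤ) ∣ genFib s (-1) m := by
    have h2 : genFib s (-1) ((n / r) * r) =
        genFib s (-1) r * genFib (gW s r) (-1) (n / r) := mulf s r (n / r)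
    rw [show (n/r) * r = m from by rw [hm, Nat.mul_comm]] at h2
    rw [h2]; exact hrdvd.mul_right _
  have hadd := addf s m u
  rw [← hnm] at hadd
  have h1 : (p:ℤ) ∣ genFib s (-1) (m+1) * genFib s (-1) (u+1) := by
    have h3 : genFib s (-1) (m+1) * genFib s (-1) (u+1) =
        genFib s (-1) n + genFib s (-1) m * genFib s (-1) u := by linear_combination -hadd
    rw [h3]; exact dvd_add hd (hpm.mul_right _)
  rcases hPint.2.2 _ _ h1 with h | h
  · exact hPint.not_unit ((copr s m).isUnit_of_dvd' hpm h)
  · have := hleast (u+1) (Nat.succ_pos u) h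
    have hlt : n % r < r := Nat.mod_lt n hr
    omega

lemma key (s : ℤ) (hs : 2 ≤ s) (p : ℕ) (hp : p.Prime) (hodd : Odd p) :
    ∀ k : ℕ, 0 < k → ∀ n : ℕ, 0 < n → (p:ℤ) ∣ genFib s (-1) n →
      padicValInt p (genFib s (-1) (k * n)) =
        padicValInt p (genFib s (-1) n) + padicValNat p k := by
  haveI : Fact p.Prime := ⟨hp⟩
  have hPint : Prime (p:ℤ) := Nat.prime_iff_prime_int.mp hp
  intro k
  induction k using Nat.strong_induction_on with
  | _ k IH =>
  intro hk n hn hdvd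
  set w := gW s n with hwdef
  obtain ⟨c, hc⟩ := hdvd
  have hdvd : (p:ℤ) ∣ genFib s (-1) n := ⟨c, hc⟩
  have hw2 : (p:ℤ)^2 ∣ (w - 2) * (w + 2) := ⟨(s^2-4) * c^2, by
    linear_combination wsq s n + (s^2-4) * (genFib s (-1) n + (p:ℤ)*c) * hc⟩
  have hdich : (p:ℤ)^2 ∣ (w - 2) ∨ (p:ℤ)^2 ∣ (w + 2) := by
    have hpd : (p:ℤ) ∣ (w-2)*(w+2) := dvd_trans (dvd_pow_self _ two_ne_zero) hw2
    have hnotboth : ¬ ((p:ℤ) ∣ (w-2) ∧ (p:ℤ) ∣ (w+2)) := by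
      rintro ⟨h1, h2⟩
      have h4 : (p:ℤ) ∣ 4 := by
        have := dvd_sub h2 h1
        simpa using this
      have h4' : p ∣ 4 := by exact_mod_cast h4
      have h2' : p ∣ 2 := hp.dvd_of_dvd_pow (n := 2) (by norm_num; exact h4')
      have hp2 : p = 2 := (Nat.prime_dvd_prime_iff_eq hp Nat.prime_two).mp h2'
      rw [Nat.odd_iff, hp2] at hodd
      omega
    rcases hPint.2.2 _ _ hpd with h | h
    · left
      have hcop : IsCoprime ((p:ℤ)^2) (w+2) :=
        IsCoprime.pow_left ((hPint.coprime_iff_not_dvd).mpr (fun hh => hnotboth ⟨h, hh⟩))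
      exact hcop.dvd_of_dvd_mul_right hw2
    · right
      have hcop : IsCoprime ((p:ℤ)^2) (w-2) :=
        IsCoprime.pow_left ((hPint.coprime_iff_not_dvd).mpr (fun hh => hnotboth ⟨hh, h⟩))
      exact hcop.dvd_of_dvd_mul_left hw2
  have hG : ∀ j : ℕ, ∃ cj : ℤ, (cj = 1 ∨ cj = -1) ∧
      (p:ℤ)^2 ∣ (genFib w (-1) j - cj * j) := by
    intro j
    rcases hdich with h | h
    · refine ⟨1, Or.inl rfl, ?_⟩
      have hpc := polycong w 2 j
      rw [gf2val j] at hpc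
      simpa using dvd_trans h hpc
    · refine ⟨(-1)^(j+1), ?_, ?_⟩
      · rcases Nat.even_or_odd (j+1) with he | ho
        · exact Or.inl (Even.neg_one_pow he)
        · exact Or.inr (Odd.neg_one_pow ho)
      · have hpc := polycong w (-2) j
        rw [gfneg2val j] at hpc
        rw [sub_neg_eq_add] at hpc
        exact dvd_trans h hpc
  have hfn0 : genFib s (-1) n ≠ 0 := ne_of_gt (pos s hs n hn)
  by_cases hpk : p ∣ k
  · obtain ⟨k', rfl⟩ := hpk
    have hk' : 0 < k' := Nat.pos_of_ne_zero (fun h => by simp [h] at hk)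
    have hk'lt : k' < p * k' := by
      calc k' = 1 * k' := (one_mul k').symm
      _ < p * k' := (Nat.mul_lt_mul_right hk').mpr hp.one_lt
    obtain ⟨cp, hcp1, hcp2⟩ := hG p
    obtain ⟨d, hd⟩ := hcp2
    have hGp : genFib w (-1) p = (p:ℤ) * (cp + (p:ℤ) * d) := by linear_combination hd
    have hcpd : ¬ (p:ℤ) ∣ (cp + (p:ℤ)*d) := by
      intro hh
      have hdc : (p:ℤ) ∣ cp := by
        have := hh.sub (Dvd.intro d rfl)
        simpa using this
      rcases hcp1 with rfl | rfl
      · exact hPint.not_dvd_one hdc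
      · exact hPint.not_dvd_one ((dvd_neg).mp hdc)
    have hcpd0 : cp + (p:ℤ)*d ≠ 0 := fun hh => hcpd (hh ▸ dvd_zero _)
    have hGp0 : genFib w (-1) p ≠ 0 := by
      rw [hGp]
      exact mul_ne_zero (by exact_mod_cast hp.ne_zero) hcpd0
    have hvGp : padicValInt p (genFib w (-1) p) = 1 := by
      rw [hGp, padicValInt.mul (by exact_mod_cast hp.ne_zero) hcpd0,
        padicValInt.self hp.one_lt, padicValInt.eq_zero_of_not_dvd hcpd]
    have hfpn : genFib s (-1) (p * n) = genFib s (-1) n * genFib w (-1) p := mulf s n p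
    have hdvdpn : (p:ℤ) ∣ genFib s (-1) (p*n) := by
      rw [hfpn]; exact hdvd.mul_right _
    have hpn : 0 < p * n := Nat.mul_pos hp.pos hn
    have hIH := IH k' hk'lt hk' (p*n) hpn hdvdpn
    have hee : k' * (p * n) = p * k' * n := by ring
    rw [hee] at hIH
    rw [hIH, hfpn, padicValInt.mul hfn0 hGp0, hvGp]
    have hv : padicValNat p (p * k') = 1 + padicValNat p k' := by
      rw [padicValNat.mul hp.pos.ne' hk'.ne', padicValNat.self hp.one_lt]
    rw [hv]
    omega
  · obtain ⟨ck, hck1, hck2⟩ := hG k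
    have hnd : ¬ (p:ℤ) ∣ genFib w (-1) k := by
      intro hh
      obtain ⟨d, hd⟩ := hck2
      have h1 : (p:ℤ) ∣ ck * k := by
        have h3 : ck * (k:ℤ) = genFib w (-1) k - (p:ℤ)^2 * d := by linear_combination -hd
        rw [h3]
        exact dvd_sub hh ((dvd_pow_self _ two_ne_zero).mul_right d)
      rcases hPint.2.2 _ _ h1 with h | h
      · rcases hck1 with rfl | rfl
        · exact hPint.not_dvd_one h
        · exact hPint.not_dvd_one ((dvd_neg).mp h)
      · exact hpk (by exact_mod_cast h)
    have hG0 : genFib w (-1) k ≠ 0 := fun hh => hnd (hh ▸ dvd_zero _)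
    rw [mulf s n k, padicValInt.mul hfn0 hG0,
      padicValInt.eq_zero_of_not_dvd hnd, padicValNat.eq_zero_of_not_dvd hpk]

end GFaux

/-- p-adic valuation of f_n(s,-1) in terms of the rank r(p). -/
theorem padicVal_fib (s : ℤ) (hs : 2 ≤ s) (p : ℕ) (hp : p.Prime) (hodd : Odd p)
    (r : ℕ) (hr : 0 < r) (hrdvd : (p : ℤ) ∣ genFib s (-1) r)
    (hleast : ∀ l : ℕ, 0 < l → (p : ℤ) ∣ genFib s (-1) l → r ≤ l)
    (e : ℕ) (he : e = padicValInt p (genFib s (-1) r)) :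
    ∀ n : ℕ, 0 < n →
      (r ∣ n → (padicValInt p (genFib s (-1) n) : ℤ) =
        (padicValNat p n : ℤ) - (padicValNat p r : ℤ) + (e : ℤ)) ∧
      (¬ r ∣ n → padicValInt p (genFib s (-1) n) = 0) := by
  haveI : Fact p.Prime := ⟨hp⟩
  intro n hn
  constructor
  · intro hrn
    obtain ⟨k, rfl⟩ := hrn
    have hk : 0 < k := Nat.pos_of_ne_zero (fun h => by simp [h] at hn)
    have hkey := GFaux.key s hs p hp hodd k hk r hr hrdvd
    rw [show k * r = r * k from Nat.mul_comm k r] at hkey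
    rw [hkey, ← he]
    have hv : padicValNat p (r * k) = padicValNat p r + padicValNat p k :=
      padicValNat.mul hr.ne' hk.ne'
    rw [hv]; push_cast; ring
  · intro hnr
    apply padicValInt.eq_zero_of_not_dvd
    intro hd
    exact hnr (GFaux.rank_conv s p hp r hr hrdvd hleast n hn hd)
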